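/- In a 2-type Swap Schelling Game on a 4-neighbor grid, any strategy profile in which every agent on a corner or middle vertex has utility at least 1/2 and every agent on a border vertex has utility at least 2/3 is a swap equilibrium. -/

import Mathlib

open SimpleGraph Finset
open scoped Classical

noncomputable def ssgUtil {V A : Type*} [Fintype V] [DecidableEq V]
    (G : SimpleGraph V) [DecidableRel G.Adj]
    {k : ℕ} (c : A → Fin k) (σ : A ≃ V) (i : A) : ℚ :=
  (((G.neighborFinset (σ i)).filter (fun v => c (σ.symm v) = c i)).card : ℚ) /
    (G.degree (σ i) : ℚ)

def ssgSwap {V A : Type*} [DecidableEq V] (σ : A ≃ V) (i j : A) : A ≃ V :=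
  σ.trans (Equiv.swap (σ i) (σ j))

def ssgProfitable {V A : Type*} [Fintype V] [DecidableEq V]
    (G : SimpleGraph V) [DecidableRel G.Adj]
    {k : ℕ} (c : A → Fin k) (σ : A ≃ V) (i j : A) : Prop :=
  c i ≠ c j ∧
    ssgUtil G c σ i < ssgUtil G c (ssgSwap σ i j) i ∧
    ssgUtil G c σ j < ssgUtil G c (ssgSwap σ i j) j

def ssgEquilibrium {V A : Type*} [Fintype V] [DecidableEq V]
    (G : SimpleGraph V) [DecidableRel G.Adj]
    {k : ℕ} (c : A → Fin k) (σ : A ≃ V) : Prop :=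
  ∀ i j : A, ¬ ssgProfitable G c σ i j

def ssgLocalEquilibrium {V A : Type*} [Fintype V] [DecidableEq V]
    (G : SimpleGraph V) [DecidableRel G.Adj]
    {k : ℕ} (c : A → Fin k) (σ : A ≃ V) : Prop :=
  ∀ i j : A, G.Adj (σ i) (σ j) → ¬ ssgProfitable G c σ i j

noncomputable def ssgWelfare {V A : Type*} [Fintype V] [DecidableEq V] [Fintype A]
    (G : SimpleGraph V) [DecidableRel G.Adj]
    {k : ℕ} (c : A → Fin k) (σ : A ≃ V) : ℚ :=
  ∑ i : A, ssgUtil G c σ i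

noncomputable def ssgPhi {V A : Type*} [Fintype V] [DecidableEq V]
    (G : SimpleGraph V) [DecidableRel G.Adj]
    {k : ℕ} (c : A → Fin k) (σ : A ≃ V) : ℕ :=
  (G.edgeFinset.filter (fun e => ∀ u ∈ e, ∀ v ∈ e, c (σ.symm u) = c (σ.symm v))).card


def grid4 (l h : ℕ) : SimpleGraph (Fin l × Fin h) where
  Adj p q := Nat.dist p.1.val q.1.val + Nat.dist p.2.val q.2.val = 1
  symm := by
    constructor
    intro p q hpq
    rwa [Nat.dist_comm p.1.val, Nat.dist_comm p.2.val] at hpq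
  loopless := by constructor; intro p hp; simp [Nat.dist_self] at hp

instance (l h : ℕ) : DecidableRel (grid4 l h).Adj :=
  fun p q => inferInstanceAs (Decidable
    (Nat.dist p.1.val q.1.val + Nat.dist p.2.val q.2.val = 1))

lemma fin_dist_card {n : ℕ} (hn : 2 ≤ n) (a : Fin n) :
    1 ≤ (Finset.univ.filter (fun b : Fin n => Nat.dist a.val b.val = 1)).card ∧
    (Finset.univ.filter (fun b : Fin n => Nat.dist a.val b.val = 1)).card ≤ 2 := by
  constructor
  · rw [Nat.succ_le_iff, Finset.card_pos]
    by_cases hcase : a.val + 1 < n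
    · exact ⟨⟨a.val + 1, hcase⟩, by simp [Nat.dist.eq_1]⟩
    · refine ⟨⟨a.val - 1, by omega⟩, ?_⟩
      have ha : a.val < n := a.isLt
      simp only [Finset.mem_filter, Finset.mem_univ, true_and, Nat.dist.eq_1]
      omega
  · have : ∀ b ∈ Finset.univ.filter (fun b : Fin n => Nat.dist a.val b.val = 1),
        b.val ∈ ({a.val + 1, a.val - 1} : Finset ℕ) := by
      intro b hb
      simp only [Finset.mem_filter, Finset.mem_univ, true_and, Nat.dist.eq_1] at hb
      simp only [Finset.mem_insert, Finset.mem_singleton]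
      omega
    calc _ ≤ ({a.val + 1, a.val - 1} : Finset ℕ).card :=
          Finset.card_le_card_of_injOn Fin.val this
            (Function.Injective.injOn Fin.val_injective)
      _ ≤ 2 := Finset.card_insert_le _ _ |>.trans (by simp)

lemma grid4_degree {l h : ℕ} (hl : 2 ≤ l) (hh : 2 ≤ h) (v : Fin l × Fin h) :
    (grid4 l h).degree v = 2 ∨ (grid4 l h).degree v = 3 ∨ (grid4 l h).degree v = 4 := by
  obtain ⟨x, y⟩ := v
  have hdecomp : (grid4 l h).neighborFinset (x, y) =
      ((Finset.univ.filter (fun x' : Fin l => Nat.dist x.val x'.val = 1)).image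
        (fun x' => (x', y))) ∪
      ((Finset.univ.filter (fun y' : Fin h => Nat.dist y.val y'.val = 1)).image
        (fun y' => (x, y'))) := by
    ext ⟨x', y'⟩
    simp only [SimpleGraph.mem_neighborFinset, Finset.mem_union, Finset.mem_image,
      Finset.mem_filter, Finset.mem_univ, true_and, Prod.mk.injEq]
    simp only [grid4]
    constructor
    · intro hadj
      by_cases h0 : Nat.dist x.val x'.val = 0
      · right
        have hx : x = x' := Fin.ext (by simp [Nat.dist] at h0; omega)
        exact ⟨y', by omega, hx, rfl⟩
      · left
        have hy0 : Nat.dist y.val y'.val = 0 := by omega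
        have hy : y = y' := Fin.ext (by simp [Nat.dist] at hy0; omega)
        exact ⟨x', by omega, rfl, hy⟩
    · rintro (⟨x'', hd, rfl, rfl⟩ | ⟨y'', hd, rfl, rfl⟩) <;>
        simp [Nat.dist_self, hd]
  have hdisj : Disjoint
      ((Finset.univ.filter (fun x' : Fin l => Nat.dist x.val x'.val = 1)).image
        (fun x' => (x', y)))
      ((Finset.univ.filter (fun y' : Fin h => Nat.dist y.val y'.val = 1)).image
        (fun y' => (x, y'))) := by
    rw [Finset.disjoint_left]
    rintro ⟨a, b⟩ h1 h2
    simp only [Finset.mem_image, Finset.mem_filter, Finset.mem_univ, true_and,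
      Prod.mk.injEq] at h1 h2
    obtain ⟨x'', hd1, rfl, rfl⟩ := h1
    obtain ⟨y'', hd2, h3, h4⟩ := h2
    rw [← h3] at hd1
    simp [Nat.dist_self] at hd1
  have hinj1 : Function.Injective (fun x' : Fin l => (x', y)) := by
    intro a b hab; exact congrArg Prod.fst hab
  have hinj2 : Function.Injective (fun y' : Fin h => (x, y')) := by
    intro a b hab; exact congrArg Prod.snd hab
  have hdeg : (grid4 l h).degree (x, y) =
      (Finset.univ.filter (fun x' : Fin l => Nat.dist x.val x'.val = 1)).card +
      (Finset.univ.filter (fun y' : Fin h => Nat.dist y.val y'.val = 1)).card := by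
    rw [← SimpleGraph.card_neighborFinset_eq_degree, hdecomp,
      Finset.card_union_of_disjoint hdisj,
      Finset.card_image_of_injective _ hinj1, Finset.card_image_of_injective _ hinj2]
  obtain ⟨h1x, h2x⟩ := fin_dist_card hl x
  obtain ⟨h1y, h2y⟩ := fin_dist_card hh y
  omega

theorem stmt17 (l h : ℕ) (hl : 2 ≤ l) (hh : 2 ≤ h)
    (c : Fin l × Fin h → Fin 2) (σ : (Fin l × Fin h) ≃ (Fin l × Fin h))
    (hcorner : ∀ i, (grid4 l h).degree (σ i) = 2 →
      (1 : ℚ) / 2 ≤ ssgUtil (grid4 l h) c σ i)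
    (hmiddle : ∀ i, (grid4 l h).degree (σ i) = 4 →
      (1 : ℚ) / 2 ≤ ssgUtil (grid4 l h) c σ i)
    (hborder : ∀ i, (grid4 l h).degree (σ i) = 3 →
      (2 : ℚ) / 3 ≤ ssgUtil (grid4 l h) c σ i) :
    ssgEquilibrium (grid4 l h) c σ := by
  have hhalf : ∀ i, (1 : ℚ) / 2 ≤ ssgUtil (grid4 l h) c σ i := by
    intro i
    rcases grid4_degree hl hh (σ i) with hd | hd | hd
    · exact hcorner i hd
    · linarith [hborder i hd]
    · exact hmiddle i hd
  rintro i j ⟨hc, hi, -⟩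
  set σ' := ssgSwap σ i j with hσ'
  have hσ'i : σ' i = σ j := by
    simp [hσ', ssgSwap, Equiv.swap_apply_left]
  have hσ'symm : ∀ v, σ'.symm v = σ.symm (Equiv.swap (σ i) (σ j) v) := by
    intro v; simp [hσ', ssgSwap]
  set N := (grid4 l h).neighborFinset (σ j) with hN
  set newF := N.filter (fun v => c (σ'.symm v) = c i) with hnewF
  set A := N.filter (fun v => c (σ.symm v) = c i) with hA
  set B := N.filter (fun v => c (σ.symm v) = c j) with hB
  have hsub : newF ⊆ A := by
    intro v hv
    simp only [hnewF, hA, Finset.mem_filter] at hv ⊢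
    refine ⟨hv.1, ?_⟩
    have hv2 := hv.2
    by_cases h1 : v = σ i
    · subst h1
      rw [hσ'symm, Equiv.swap_apply_left, Equiv.symm_apply_apply] at hv2
      exact absurd hv2.symm hc
    · by_cases h2 : v = σ j
      · exfalso
        rw [hN] at hv
        exact (grid4 l h).notMem_neighborFinset_self (σ j) (h2 ▸ hv.1)
      · rwa [hσ'symm, Equiv.swap_apply_of_ne_of_ne h1 h2] at hv2
  have hdisj : Disjoint newF B := by
    rw [Finset.disjoint_left]
    intro v hv1 hv2
    have e1 := (Finset.mem_filter.mp (hsub hv1)).2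
    have e2 := (Finset.mem_filter.mp hv2).2
    exact hc (e1.symm.trans e2)
  have hcard : newF.card + B.card ≤ (grid4 l h).degree (σ j) := by
    rw [← Finset.card_union_of_disjoint hdisj, ← SimpleGraph.card_neighborFinset_eq_degree]
    exact Finset.card_le_card (Finset.union_subset
      (hsub.trans (Finset.filter_subset _ _)) (Finset.filter_subset _ _))
  have hdposn : 0 < (grid4 l h).degree (σ j) := by
    rcases grid4_degree hl hh (σ j) with hd | hd | hd <;> omega
  have hdpos : (0 : ℚ) < ((grid4 l h).degree (σ j) : ℚ) := by exact_mod_cast hdposn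
  have hkey : ssgUtil (grid4 l h) c σ' i ≤ 1 - ssgUtil (grid4 l h) c σ j := by
    rw [show ssgUtil (grid4 l h) c σ' i = (newF.card : ℚ) / ((grid4 l h).degree (σ' i) : ℚ)
        from by rw [ssgUtil, hnewF, hN, hσ'i],
      show ssgUtil (grid4 l h) c σ j = (B.card : ℚ) / ((grid4 l h).degree (σ j) : ℚ)
        from by rw [ssgUtil, hB, hN],
      hσ'i]
    rw [div_le_iff₀ hdpos, sub_mul, one_mul, div_mul_cancel₀ _ (ne_of_gt hdpos)]
    have : (newF.card : ℚ) + B.card ≤ ((grid4 l h).degree (σ j) : ℚ) := by exact_mod_cast hcard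
    linarith
  have h1 := hhalf i
  have h2 := hhalf j
  linarith
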